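/- Let Q be a covering ILP whose constraints each split as Σ_{v∈H_u} x_v + Σ_{v∈V_u} x_v ≥ 1, and suppose it decomposes (via the half-rounding sets A_1, A_2) into two sub-ILPs Q', Q'' with relaxations Q'_l, Q''_l such that OPT(Q') ≤ α·OPT(Q'_l) and OPT(Q'') ≤ β·OPT(Q''_l). Then OPT(Q) ≤ 2(α+β)·OPT(Q_l). -/
import Mathlib


attribute [local instance] Classical.propDecidable


open Finset in
lemma half_sum_min {ι : Type*} (s : Finset ι) (f : ι → ℝ) (h0 : ∀ v ∈ s, 0 ≤ f v)
    (h : (1/2 : ℝ) ≤ ∑ v ∈ s, f v) : 1 ≤ ∑ v ∈ s, min (2 * f v) 1 := by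
  by_cases hex : ∃ v ∈ s, (1 : ℝ) ≤ 2 * f v
  · obtain ⟨v, hv, hv1⟩ := hex
    have h1 : min (2 * f v) 1 = 1 := min_eq_right hv1
    calc (1:ℝ) = min (2 * f v) 1 := h1.symm
      _ ≤ ∑ v ∈ s, min (2 * f v) 1 := by
          apply Finset.single_le_sum (fun w hw => ?_) hv
          exact le_min (by linarith [h0 w hw]) zero_le_one
  · push_neg at hex
    have : ∀ v ∈ s, min (2 * f v) 1 = 2 * f v := fun v hv => min_eq_left (le_of_lt (hex v hv))
    rw [Finset.sum_congr rfl this, ← Finset.mul_sum]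
    linarith

open Finset in
/-- The LP relaxation of the sub-ILP determined by `W` has optimum at most `2 ∑ xs`. -/
lemma sub_lp_bound {ι κ : Type*} [Fintype ι] [Fintype κ] (W : κ → Finset ι) (xs : ι → ℝ)
    (hb : ∀ v, xs v ∈ Set.Icc (0 : ℝ) 1) :
    sInf {c : ℝ | ∃ x : ι → ℝ, (∀ v, x v ∈ Set.Icc (0 : ℝ) 1) ∧
        (∀ v, v ∉ univ.filter (fun w => ∃ u : κ, (1/2 : ℝ) ≤ ∑ v' ∈ W u, xs v' ∧ w ∈ W u) → x v = 0) ∧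
        (∀ u : κ, (1/2 : ℝ) ≤ ∑ v' ∈ W u, xs v' → 1 ≤ ∑ v ∈ W u, x v) ∧ c = ∑ v, x v}
      ≤ 2 * ∑ v, xs v := by
  set B := univ.filter (fun w => ∃ u : κ, (1/2 : ℝ) ≤ ∑ v' ∈ W u, xs v' ∧ w ∈ W u) with hB
  set y : ι → ℝ := fun v => if v ∈ B then min (2 * xs v) 1 else 0 with hy
  have hy01 : ∀ v, y v ∈ Set.Icc (0:ℝ) 1 := by
    intro v
    simp only [hy]
    split
    · exact ⟨le_min (by linarith [(hb v).1]) zero_le_one, min_le_right _ _⟩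
    · exact ⟨le_refl 0, zero_le_one⟩
  have hmem : (∑ v, y v) ∈ {c : ℝ | ∃ x : ι → ℝ, (∀ v, x v ∈ Set.Icc (0 : ℝ) 1) ∧
        (∀ v, v ∉ B → x v = 0) ∧
        (∀ u : κ, (1/2 : ℝ) ≤ ∑ v' ∈ W u, xs v' → 1 ≤ ∑ v ∈ W u, x v) ∧ c = ∑ v, x v} := by
    refine ⟨y, hy01, fun v hv => if_neg hv, fun u hu => ?_, rfl⟩
    have hWB : ∀ v ∈ W u, y v = min (2 * xs v) 1 := by
      intro v hv
      have : v ∈ B := by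
        rw [hB]; simp only [mem_filter, mem_univ, true_and]; exact ⟨u, hu, hv⟩
      simp [hy, this]
    rw [Finset.sum_congr rfl hWB]
    exact half_sum_min _ _ (fun v _ => (hb v).1) hu
  have hbdd : BddBelow {c : ℝ | ∃ x : ι → ℝ, (∀ v, x v ∈ Set.Icc (0 : ℝ) 1) ∧
        (∀ v, v ∉ B → x v = 0) ∧
        (∀ u : κ, (1/2 : ℝ) ≤ ∑ v' ∈ W u, xs v' → 1 ≤ ∑ v ∈ W u, x v) ∧ c = ∑ v, x v} := by
    refine ⟨0, ?_⟩
    rintro c ⟨x, hx, -, -, rfl⟩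
    exact Finset.sum_nonneg fun v _ => (hx v).1
  calc sInf _ ≤ ∑ v, y v := csInf_le hbdd hmem
    _ ≤ 2 * ∑ v, xs v := by
        rw [Finset.mul_sum]
        apply Finset.sum_le_sum
        intro v _
        simp only [hy]
        split
        · exact min_le_left _ _ |>.trans_eq rfl
        · linarith [(hb v).1]

open Finset in
/-- The integral sub-ILP set is nonempty : take the indicator of `B`. -/
lemma sub_int_nonempty {ι κ : Type*} [Fintype ι] [Fintype κ] (W : κ → Finset ι) (xs : ι → ℝ) :
    {c : ℝ | ∃ x : ι → ℝ, (∀ v, x v = 0 ∨ x v = 1) ∧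
        (∀ v, v ∉ univ.filter (fun w => ∃ u : κ, (1/2 : ℝ) ≤ ∑ v' ∈ W u, xs v' ∧ w ∈ W u) → x v = 0) ∧
        (∀ u : κ, (1/2 : ℝ) ≤ ∑ v' ∈ W u, xs v' → 1 ≤ ∑ v ∈ W u, x v) ∧ c = ∑ v, x v}.Nonempty := by
  classical
  set B := univ.filter (fun w => ∃ u : κ, (1/2 : ℝ) ≤ ∑ v' ∈ W u, xs v' ∧ w ∈ W u) with hB
  set x : ι → ℝ := fun v => if v ∈ B then 1 else 0 with hx
  refine ⟨∑ v, x v, x, fun v => ?_, fun v hv => if_neg hv, fun u hu => ?_, rfl⟩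
  · simp only [hx]; split <;> simp
  · -- W u is nonempty since its xs-sum is ≥ 1/2 > 0
    have hne : (W u).Nonempty := by
      by_contra h
      rw [Finset.not_nonempty_iff_eq_empty] at h
      rw [h] at hu; simp at hu; linarith
    obtain ⟨v, hv⟩ := hne
    have hvB : v ∈ B := by
      rw [hB]; simp only [mem_filter, mem_univ, true_and]; exact ⟨u, hu, hv⟩
    calc (1:ℝ) = x v := by simp [hx, hvB]
      _ ≤ ∑ w ∈ W u, x w := by
          apply Finset.single_le_sum (fun w _ => ?_) hv
          simp only [hx]; split <;> norm_num

open Finset in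
/-- if a covering ILP `Q` with split constraints
`∑_{v∈H u} x v + ∑_{v∈V u} x v ≥ 1` decomposes via the half-rounding sets
`A₁ = {u : ∑_{H u} x* ≥ 1/2}`, `A₂ = {u : ∑_{V u} x* ≥ 1/2}` (for an optimal LP
solution `x*`) into sub-ILPs `Q'` (cover `A₁` by variables of `B₁ = ⋃_{u∈A₁} H u`)
and `Q''` (cover `A₂` by variables of `B₂ = ⋃_{u∈A₂} V u`) with
`OPT(Q') ≤ α·OPT(Q'_l)` and `OPT(Q'') ≤ β·OPT(Q''_l)`, then
`OPT(Q) ≤ 2(α+β)·OPT(Q_l)`. -/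
theorem covering_ILP_decomposition {ι κ : Type*} [Fintype ι] [Fintype κ]
    (H V : κ → Finset ι) (hdisj : ∀ u, Disjoint (H u) (V u))
    (hne : ∀ u, (H u ∪ V u).Nonempty)
    (α β : ℝ) (hα : 0 ≤ α) (hβ : 0 ≤ β)
    (xs : ι → ℝ)
    (hbound : ∀ v, xs v ∈ Set.Icc (0 : ℝ) 1)
    (hfeas : ∀ u, 1 ≤ ∑ v ∈ H u, xs v + ∑ v ∈ V u, xs v)
    (hopt : ∀ x' : ι → ℝ, (∀ v, x' v ∈ Set.Icc (0 : ℝ) 1) →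
      (∀ u, 1 ≤ ∑ v ∈ H u, x' v + ∑ v ∈ V u, x' v) → ∑ v, xs v ≤ ∑ v, x' v)
    -- OPT(Q') ≤ α · OPT(Q'_l)
    (hQ' : sInf {c : ℝ | ∃ x : ι → ℝ, (∀ v, x v = 0 ∨ x v = 1) ∧
        (∀ v, v ∉ univ.filter (fun w => ∃ u : κ, (1/2 : ℝ) ≤ ∑ v' ∈ H u, xs v' ∧ w ∈ H u) → x v = 0) ∧
        (∀ u : κ, (1/2 : ℝ) ≤ ∑ v' ∈ H u, xs v' → 1 ≤ ∑ v ∈ H u, x v) ∧ c = ∑ v, x v}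
      ≤ α * sInf {c : ℝ | ∃ x : ι → ℝ, (∀ v, x v ∈ Set.Icc (0 : ℝ) 1) ∧
        (∀ v, v ∉ univ.filter (fun w => ∃ u : κ, (1/2 : ℝ) ≤ ∑ v' ∈ H u, xs v' ∧ w ∈ H u) → x v = 0) ∧
        (∀ u : κ, (1/2 : ℝ) ≤ ∑ v' ∈ H u, xs v' → 1 ≤ ∑ v ∈ H u, x v) ∧ c = ∑ v, x v})
    -- OPT(Q'') ≤ β · OPT(Q''_l)
    (hQ'' : sInf {c : ℝ | ∃ x : ι → ℝ, (∀ v, x v = 0 ∨ x v = 1) ∧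
        (∀ v, v ∉ univ.filter (fun w => ∃ u : κ, (1/2 : ℝ) ≤ ∑ v' ∈ V u, xs v' ∧ w ∈ V u) → x v = 0) ∧
        (∀ u : κ, (1/2 : ℝ) ≤ ∑ v' ∈ V u, xs v' → 1 ≤ ∑ v ∈ V u, x v) ∧ c = ∑ v, x v}
      ≤ β * sInf {c : ℝ | ∃ x : ι → ℝ, (∀ v, x v ∈ Set.Icc (0 : ℝ) 1) ∧
        (∀ v, v ∉ univ.filter (fun w => ∃ u : κ, (1/2 : ℝ) ≤ ∑ v' ∈ V u, xs v' ∧ w ∈ V u) → x v = 0) ∧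
        (∀ u : κ, (1/2 : ℝ) ≤ ∑ v' ∈ V u, xs v' → 1 ≤ ∑ v ∈ V u, x v) ∧ c = ∑ v, x v}) :
    sInf {c : ℝ | ∃ x : ι → ℝ, (∀ v, x v = 0 ∨ x v = 1) ∧
        (∀ u : κ, 1 ≤ ∑ v ∈ H u, x v + ∑ v ∈ V u, x v) ∧ c = ∑ v, x v}
      ≤ 2 * (α + β) * sInf {c : ℝ | ∃ x : ι → ℝ, (∀ v, x v ∈ Set.Icc (0 : ℝ) 1) ∧
        (∀ u : κ, 1 ≤ ∑ v ∈ H u, x v + ∑ v ∈ V u, x v) ∧ c = ∑ v, x v} := by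
  classical
  -- the LP optimum of Q equals ∑ xs
  have hQl : sInf {c : ℝ | ∃ x : ι → ℝ, (∀ v, x v ∈ Set.Icc (0 : ℝ) 1) ∧
        (∀ u : κ, 1 ≤ ∑ v ∈ H u, x v + ∑ v ∈ V u, x v) ∧ c = ∑ v, x v} = ∑ v, xs v := by
    apply le_antisymm
    · refine csInf_le ⟨0, ?_⟩ ⟨xs, hbound, hfeas, rfl⟩
      rintro c ⟨x, hx, -, rfl⟩
      exact Finset.sum_nonneg fun v _ => (hx v).1
    · refine le_csInf ⟨∑ v, xs v, xs, hbound, hfeas, rfl⟩ ?_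
      rintro c ⟨x, hx, hf, rfl⟩
      exact hopt x hx hf
  -- sub-ILP bounds
  have hlp' := sub_lp_bound H xs hbound
  have hlp'' := sub_lp_bound V xs hbound
  have hS' : sInf {c : ℝ | ∃ x : ι → ℝ, (∀ v, x v = 0 ∨ x v = 1) ∧
        (∀ v, v ∉ univ.filter (fun w => ∃ u : κ, (1/2 : ℝ) ≤ ∑ v' ∈ H u, xs v' ∧ w ∈ H u) → x v = 0) ∧
        (∀ u : κ, (1/2 : ℝ) ≤ ∑ v' ∈ H u, xs v' → 1 ≤ ∑ v ∈ H u, x v) ∧ c = ∑ v, x v}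
      ≤ α * (2 * ∑ v, xs v) :=
    hQ'.trans (mul_le_mul_of_nonneg_left hlp' hα)
  have hS'' : sInf {c : ℝ | ∃ x : ι → ℝ, (∀ v, x v = 0 ∨ x v = 1) ∧
        (∀ v, v ∉ univ.filter (fun w => ∃ u : κ, (1/2 : ℝ) ≤ ∑ v' ∈ V u, xs v' ∧ w ∈ V u) → x v = 0) ∧
        (∀ u : κ, (1/2 : ℝ) ≤ ∑ v' ∈ V u, xs v' → 1 ≤ ∑ v ∈ V u, x v) ∧ c = ∑ v, x v}
      ≤ β * (2 * ∑ v, xs v) :=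
    hQ''.trans (mul_le_mul_of_nonneg_left hlp'' hβ)
  have ne' := sub_int_nonempty H xs
  have ne'' := sub_int_nonempty V xs
  have hbddQ : BddBelow {c : ℝ | ∃ x : ι → ℝ, (∀ v, x v = 0 ∨ x v = 1) ∧
        (∀ u : κ, 1 ≤ ∑ v ∈ H u, x v + ∑ v ∈ V u, x v) ∧ c = ∑ v, x v} := by
    refine ⟨0, ?_⟩
    rintro c ⟨x, hx, -, rfl⟩
    refine Finset.sum_nonneg fun v _ => ?_
    rcases hx v with h | h <;> rw [h] <;> norm_num
  -- combining any integral solutions of Q' and Q'' gives a solution of Q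
  have key : ∀ c' ∈ {c : ℝ | ∃ x : ι → ℝ, (∀ v, x v = 0 ∨ x v = 1) ∧
        (∀ v, v ∉ univ.filter (fun w => ∃ u : κ, (1/2 : ℝ) ≤ ∑ v' ∈ H u, xs v' ∧ w ∈ H u) → x v = 0) ∧
        (∀ u : κ, (1/2 : ℝ) ≤ ∑ v' ∈ H u, xs v' → 1 ≤ ∑ v ∈ H u, x v) ∧ c = ∑ v, x v},
      ∀ c'' ∈ {c : ℝ | ∃ x : ι → ℝ, (∀ v, x v = 0 ∨ x v = 1) ∧
        (∀ v, v ∉ univ.filter (fun w => ∃ u : κ, (1/2 : ℝ) ≤ ∑ v' ∈ V u, xs v' ∧ w ∈ V u) → x v = 0) ∧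
        (∀ u : κ, (1/2 : ℝ) ≤ ∑ v' ∈ V u, xs v' → 1 ≤ ∑ v ∈ V u, x v) ∧ c = ∑ v, x v},
      sInf {c : ℝ | ∃ x : ι → ℝ, (∀ v, x v = 0 ∨ x v = 1) ∧
        (∀ u : κ, 1 ≤ ∑ v ∈ H u, x v + ∑ v ∈ V u, x v) ∧ c = ∑ v, x v} ≤ c' + c'' := by
    rintro c' ⟨x', hx', -, hcov', rfl⟩ c'' ⟨x'', hx'', -, hcov'', rfl⟩
    set z : ι → ℝ := fun v => max (x' v) (x'' v) with hz
    have hz01 : ∀ v, z v = 0 ∨ z v = 1 := by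
      intro v
      rcases hx' v with h1 | h1 <;> rcases hx'' v with h2 | h2 <;>
        simp [hz, h1, h2]
    have hz0 : ∀ v, 0 ≤ z v := by
      intro v; rcases hz01 v with h | h <;> rw [h] <;> norm_num
    have hx'0 : ∀ v, 0 ≤ x' v := by
      intro v; rcases hx' v with h | h <;> rw [h] <;> norm_num
    have hx''0 : ∀ v, 0 ≤ x'' v := by
      intro v; rcases hx'' v with h | h <;> rw [h] <;> norm_num
    have hzfeas : ∀ u : κ, 1 ≤ ∑ v ∈ H u, z v + ∑ v ∈ V u, z v := by
      intro u
      by_cases hu : (1/2 : ℝ) ≤ ∑ v' ∈ H u, xs v'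
      · have h1 : (1:ℝ) ≤ ∑ v ∈ H u, z v :=
          (hcov' u hu).trans (Finset.sum_le_sum fun v _ => le_max_left _ _)
        have h2 : (0:ℝ) ≤ ∑ v ∈ V u, z v := Finset.sum_nonneg fun v _ => hz0 v
        linarith
      · have hu' : (1/2 : ℝ) ≤ ∑ v' ∈ V u, xs v' := by
          have := hfeas u; push_neg at hu; linarith
        have h1 : (1:ℝ) ≤ ∑ v ∈ V u, z v :=
          (hcov'' u hu').trans (Finset.sum_le_sum fun v _ => le_max_right _ _)
        have h2 : (0:ℝ) ≤ ∑ v ∈ H u, z v := Finset.sum_nonneg fun v _ => hz0 v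
        linarith
    have hzval : ∑ v, z v ≤ ∑ v, x' v + ∑ v, x'' v := by
      rw [← Finset.sum_add_distrib]
      refine Finset.sum_le_sum fun v _ => ?_
      exact max_le (le_add_of_nonneg_right (hx''0 v)) (le_add_of_nonneg_left (hx'0 v))
    calc sInf _ ≤ ∑ v, z v := csInf_le hbddQ ⟨z, hz01, hzfeas, rfl⟩
      _ ≤ _ := hzval
  -- OPT(Q) ≤ OPT(Q') + OPT(Q'')
  have hsplit : sInf {c : ℝ | ∃ x : ι → ℝ, (∀ v, x v = 0 ∨ x v = 1) ∧
        (∀ u : κ, 1 ≤ ∑ v ∈ H u, x v + ∑ v ∈ V u, x v) ∧ c = ∑ v, x v}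
      ≤ sInf {c : ℝ | ∃ x : ι → ℝ, (∀ v, x v = 0 ∨ x v = 1) ∧
        (∀ v, v ∉ univ.filter (fun w => ∃ u : κ, (1/2 : ℝ) ≤ ∑ v' ∈ H u, xs v' ∧ w ∈ H u) → x v = 0) ∧
        (∀ u : κ, (1/2 : ℝ) ≤ ∑ v' ∈ H u, xs v' → 1 ≤ ∑ v ∈ H u, x v) ∧ c = ∑ v, x v}
      + sInf {c : ℝ | ∃ x : ι → ℝ, (∀ v, x v = 0 ∨ x v = 1) ∧
        (∀ v, v ∉ univ.filter (fun w => ∃ u : κ, (1/2 : ℝ) ≤ ∑ v' ∈ V u, xs v' ∧ w ∈ V u) → x v = 0) ∧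
        (∀ u : κ, (1/2 : ℝ) ≤ ∑ v' ∈ V u, xs v' → 1 ≤ ∑ v ∈ V u, x v) ∧ c = ∑ v, x v} := by
    have h2 : sInf {c : ℝ | ∃ x : ι → ℝ, (∀ v, x v = 0 ∨ x v = 1) ∧
        (∀ u : κ, 1 ≤ ∑ v ∈ H u, x v + ∑ v ∈ V u, x v) ∧ c = ∑ v, x v}
      - sInf {c : ℝ | ∃ x : ι → ℝ, (∀ v, x v = 0 ∨ x v = 1) ∧
        (∀ v, v ∉ univ.filter (fun w => ∃ u : κ, (1/2 : ℝ) ≤ ∑ v' ∈ V u, xs v' ∧ w ∈ V u) → x v = 0) ∧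
        (∀ u : κ, (1/2 : ℝ) ≤ ∑ v' ∈ V u, xs v' → 1 ≤ ∑ v ∈ V u, x v) ∧ c = ∑ v, x v}
      ≤ sInf {c : ℝ | ∃ x : ι → ℝ, (∀ v, x v = 0 ∨ x v = 1) ∧
        (∀ v, v ∉ univ.filter (fun w => ∃ u : κ, (1/2 : ℝ) ≤ ∑ v' ∈ H u, xs v' ∧ w ∈ H u) → x v = 0) ∧
        (∀ u : κ, (1/2 : ℝ) ≤ ∑ v' ∈ H u, xs v' → 1 ≤ ∑ v ∈ H u, x v) ∧ c = ∑ v, x v} := by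
      refine le_csInf ne' fun c' h' => ?_
      have h3 : sInf {c : ℝ | ∃ x : ι → ℝ, (∀ v, x v = 0 ∨ x v = 1) ∧
        (∀ u : κ, 1 ≤ ∑ v ∈ H u, x v + ∑ v ∈ V u, x v) ∧ c = ∑ v, x v} - c'
        ≤ sInf {c : ℝ | ∃ x : ι → ℝ, (∀ v, x v = 0 ∨ x v = 1) ∧
        (∀ v, v ∉ univ.filter (fun w => ∃ u : κ, (1/2 : ℝ) ≤ ∑ v' ∈ V u, xs v' ∧ w ∈ V u) → x v = 0) ∧
        (∀ u : κ, (1/2 : ℝ) ≤ ∑ v' ∈ V u, xs v' → 1 ≤ ∑ v ∈ V u, x v) ∧ c = ∑ v, x v} :=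
        le_csInf ne'' fun c'' h'' => by linarith [key c' h' c'' h'']
      linarith
    linarith
  rw [hQl]
  have hring : α * (2 * ∑ v, xs v) + β * (2 * ∑ v, xs v) = 2 * (α + β) * ∑ v, xs v := by ring
  linarith
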